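/- For every Borel-measurable function f : ℝ → ℝ ∪ {±∞} (i.e., f : ℝ → EReal or f : ℝ → ℝ∞ with possible infinite values) and every ε > 0, there exists a continuous function g : ℝ → ℝ ∪ {±∞} such that μ({x | f x ≠ g x}) < ε, and moreover g x is infinite only at points x where f x is infinite. -/

import Mathlib

open MeasureTheory Set
open scoped ENNReal

noncomputable def sqz (r : ℝ) : ℝ := r / (1 + |r|)
noncomputable def unsqz (t : ℝ) : ℝ := t / (1 - |t|)
noncomputable def psiE (t : ℝ) : EReal :=
  if 1 ≤ t then ⊤ else if t ≤ -1 then ⊥ else ((unsqz t : ℝ) : EReal)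

lemma abs_sqz_lt_one (r : ℝ) : |sqz r| < 1 := by
  have h : 0 < 1 + |r| := by positivity
  rw [sqz, abs_div, abs_of_pos h, div_lt_one h]
  linarith [abs_nonneg r]

lemma unsqz_sqz (r : ℝ) : unsqz (sqz r) = r := by
  have h : 0 < 1 + |r| := by positivity
  have habs : |sqz r| = |r| / (1 + |r|) := by rw [sqz, abs_div, abs_of_pos h]
  rw [unsqz, habs, sqz]
  have h2 : 1 - |r| / (1 + |r|) = 1 / (1 + |r|) := by field_simp; ring
  rw [h2]
  field_simp

lemma unsqz_mono {t s : ℝ} (ht : -1 < t) (hs : s < 1) (hts : t ≤ s) :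
    unsqz t ≤ unsqz s := by
  have ht1 : |t| < 1 := abs_lt.mpr ⟨ht, lt_of_le_of_lt hts hs⟩
  have hs1 : |s| < 1 := abs_lt.mpr ⟨lt_of_lt_of_le ht hts, hs⟩
  rw [unsqz, unsqz, div_le_div_iff₀ (by linarith) (by linarith)]
  rcases le_or_gt 0 t with h0t | h0t
  · have h0s : 0 ≤ s := le_trans h0t hts
    rw [abs_of_nonneg h0t, abs_of_nonneg h0s]; nlinarith
  · rcases le_or_gt 0 s with h0s | h0s
    · rw [abs_of_neg h0t, abs_of_nonneg h0s]; nlinarith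
    · rw [abs_of_neg h0t, abs_of_neg h0s]; nlinarith

lemma psiE_mono : Monotone psiE := by
  intro t s hts
  rw [psiE, psiE]
  by_cases h1s : 1 ≤ s
  · rw [if_pos h1s]; exact le_top
  · rw [if_neg h1s]
    have h1t : ¬ (1 ≤ t) := fun h => h1s (le_trans h hts)
    rw [if_neg h1t]
    by_cases h2t : t ≤ -1
    · rw [if_pos h2t]
      exact bot_le
    · rw [if_neg h2t]
      have h2s : ¬ (s ≤ -1) := fun h => h2t (le_trans hts h)
      rw [if_neg h2s]
      exact_mod_cast unsqz_mono (lt_of_not_ge h2t) (lt_of_not_ge h1s) hts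

lemma psiE_sqz (r : ℝ) : psiE (sqz r) = (r : EReal) := by
  have h := abs_lt.mp (abs_sqz_lt_one r)
  rw [psiE, if_neg (by linarith), if_neg (by linarith), unsqz_sqz]

lemma psiE_surj : Function.Surjective psiE := by
  intro e
  induction e using EReal.rec with
  | bot => exact ⟨-1, by rw [psiE, if_neg (by norm_num), if_pos le_rfl]⟩
  | coe r => exact ⟨sqz r, psiE_sqz r⟩
  | top => exact ⟨1, by rw [psiE, if_pos le_rfl]⟩

lemma psiE_continuous : Continuous psiE :=
  psiE_mono.continuous_of_surjective psiE_surj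

lemma psiE_top {t : ℝ} (h : psiE t = ⊤) : 1 ≤ t := by
  by_contra h1
  rw [psiE, if_neg h1] at h
  by_cases h2 : t ≤ -1
  · rw [if_pos h2] at h; exact absurd h (by simp)
  · rw [if_neg h2] at h; exact absurd h (EReal.coe_ne_top _)

lemma psiE_bot {t : ℝ} (h : psiE t = ⊥) : t ≤ -1 := by
  by_cases h1 : 1 ≤ t
  · rw [psiE, if_pos h1] at h; exact absurd h (by simp)
  · by_contra h2
    rw [psiE, if_neg h1, if_neg h2] at h
    exact absurd h (EReal.coe_ne_bot _)


lemma lusin_piece (h : ℝ → ℝ) (hm : Measurable h) (hb : ∀ x, |h x| ≤ 1)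
    (a b : ℝ) (δ : ℝ) (hδ : 0 < δ) :
    ∃ F : Set ℝ, F ⊆ Icc a b ∧ IsClosed F ∧
      volume (Icc a b \ F) ≤ ENNReal.ofReal δ ∧ ContinuousOn h F := by
  classical
  set h₁ : ℝ → ℝ := (Icc a b).indicator h with hh₁
  have hm₁ : Measurable h₁ := hm.indicator measurableSet_Icc
  have hint : Integrable h₁ volume := by
    rw [hh₁, integrable_indicator_iff measurableSet_Icc]
    refine Integrable.mono' (g := fun _ => (1:ℝ))
      (integrableOn_const measure_Icc_lt_top.ne)
      hm.aestronglyMeasurable.restrict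
      (ae_of_all _ fun x => by simpa [Real.norm_eq_abs] using hb x)
  have hd0 : ENNReal.ofReal δ ≠ 0 := (ENNReal.ofReal_pos.mpr hδ).ne'
  have H : ∀ n : ℕ, ∃ g : ℝ → ℝ, Continuous g ∧
      (∫⁻ x, ‖h₁ x - g x‖₊) ≤ ENNReal.ofReal δ * 2⁻¹ ^ (2 * n + 3) := by
    intro n
    obtain ⟨g, -, hle, hc, -⟩ := hint.exists_hasCompactSupport_lintegral_sub_le
      (ε := ENNReal.ofReal δ * 2⁻¹ ^ (2 * n + 3))
      (mul_ne_zero hd0 (pow_ne_zero _ (ENNReal.inv_ne_zero.mpr ENNReal.ofNat_ne_top)))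
    exact ⟨g, hc, hle⟩
  choose g hgc hgle using H
  set E : ℕ → Set ℝ := fun n => {x | (2⁻¹:ℝ) ^ n ≤ |h₁ x - g n x|} with hE
  have hEmeas : ∀ n, MeasurableSet (E n) := fun n =>
    measurableSet_le measurable_const ((hm₁.sub (hgc n).measurable).abs)
  have hq0 : ((2:ℝ≥0∞)⁻¹) ≠ 0 := ENNReal.inv_ne_zero.mpr ENNReal.ofNat_ne_top
  have hqt : ((2:ℝ≥0∞)⁻¹) ≠ ∞ := ENNReal.inv_ne_top.mpr (by norm_num)
  have hhalf : ∀ k : ℕ, ENNReal.ofReal ((2⁻¹:ℝ) ^ k) = (2⁻¹:ℝ≥0∞) ^ k := by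
    intro k
    rw [ENNReal.ofReal_pow (by norm_num)]
    congr 1
    rw [ENNReal.ofReal_inv_of_pos (by norm_num)]
    norm_num
  have hEvol : ∀ n, volume (E n) ≤ ENNReal.ofReal δ * 2⁻¹ ^ (n + 3) := by
    intro n
    have hset : E n = {x | ENNReal.ofReal ((2⁻¹:ℝ) ^ n) ≤ (‖h₁ x - g n x‖₊ : ℝ≥0∞)} := by
      ext x
      rw [hE]
      simp only [mem_setOf_eq, ← ENNReal.ofReal_coe_nnreal, coe_nnnorm, Real.norm_eq_abs]
      exact (ENNReal.ofReal_le_ofReal_iff (abs_nonneg _)).symm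
    have haem : AEMeasurable (fun x => (‖h₁ x - g n x‖₊ : ℝ≥0∞)) volume :=
      ((hm₁.sub (hgc n).measurable).nnnorm.coe_nnreal_ennreal).aemeasurable
    calc volume (E n)
        ≤ (∫⁻ x, ‖h₁ x - g n x‖₊) / ENNReal.ofReal ((2⁻¹:ℝ) ^ n) := by
          rw [hset]
          exact meas_ge_le_lintegral_div haem
            (by rw [hhalf]; exact pow_ne_zero _ hq0)
            (by rw [hhalf]; exact ENNReal.pow_ne_top hqt)
      _ ≤ (ENNReal.ofReal δ * 2⁻¹ ^ (2 * n + 3)) / ENNReal.ofReal ((2⁻¹:ℝ) ^ n) :=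
          ENNReal.div_le_div_right (hgle n) _
      _ = ENNReal.ofReal δ * 2⁻¹ ^ (n + 3) := by
          rw [hhalf, show 2 * n + 3 = (n + 3) + n by ring, pow_add, ← mul_assoc,
            mul_div_assoc, ENNReal.div_self (pow_ne_zero _ hq0) (ENNReal.pow_ne_top hqt),
            mul_one]
  set T : Set ℝ := ⋃ n, E n with hT
  have hTvol : volume T ≤ ENNReal.ofReal δ * 2⁻¹ := by
    calc volume T ≤ ∑' n, volume (E n) := measure_iUnion_le _
      _ ≤ ∑' n : ℕ, ENNReal.ofReal δ * 2⁻¹ ^ (n + 3) := ENNReal.tsum_le_tsum hEvol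
      _ = ENNReal.ofReal δ * (2⁻¹ ^ 3 * ∑' n : ℕ, (2⁻¹:ℝ≥0∞) ^ n) := by
          rw [ENNReal.tsum_mul_left]
          congr 1
          rw [← ENNReal.tsum_mul_left]
          congr 1 with n
          rw [pow_add]; ring
      _ = ENNReal.ofReal δ * (2⁻¹ ^ 3 * 2) := by
          rw [ENNReal.tsum_geometric, ENNReal.one_sub_inv_two, inv_inv]
      _ ≤ ENNReal.ofReal δ * 2⁻¹ := by
          gcongr
          rw [pow_succ, mul_assoc, ENNReal.inv_mul_cancel (by norm_num) (by norm_num),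
            mul_one, pow_two]
          calc (2:ℝ≥0∞)⁻¹ * 2⁻¹ ≤ 1 * 2⁻¹ := by
                gcongr; exact ENNReal.inv_le_one.mpr (by norm_num)
            _ = 2⁻¹ := one_mul _
  set S : Set ℝ := Icc a b \ T with hS
  have hSm : MeasurableSet S := measurableSet_Icc.diff (MeasurableSet.iUnion hEmeas)
  have hSvol : volume S ≠ ∞ := ((measure_mono diff_subset).trans_lt measure_Icc_lt_top).ne
  have hunif : TendstoUniformlyOn (fun n x => g n x) h₁ Filter.atTop S := by
    rw [Metric.tendstoUniformlyOn_iff]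
    intro ε' hε'
    obtain ⟨N, hN⟩ := exists_pow_lt_of_lt_one hε' (show (2⁻¹:ℝ) < 1 by norm_num)
    filter_upwards [Filter.eventually_ge_atTop N] with n hn x hx
    have hxE : x ∉ E n := fun hmem => hx.2 (mem_iUnion.2 ⟨n, hmem⟩)
    have hlt : |h₁ x - g n x| < (2⁻¹:ℝ) ^ n := lt_of_not_ge hxE
    have hmon : (2⁻¹:ℝ) ^ n ≤ (2⁻¹:ℝ) ^ N :=
      pow_le_pow_of_le_one (by norm_num) (by norm_num) hn
    calc dist (h₁ x) (g n x) = |h₁ x - g n x| := Real.dist_eq _ _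
      _ < (2⁻¹:ℝ) ^ n := hlt
      _ ≤ (2⁻¹:ℝ) ^ N := hmon
      _ < ε' := hN
  have hcont₁ : ContinuousOn h₁ S :=
    hunif.continuousOn (Filter.Frequently.of_forall fun n => (hgc n).continuousOn)
  have hconth : ContinuousOn h S :=
    hcont₁.congr fun x hx => (indicator_of_mem hx.1 h).symm
  obtain ⟨K, hKS, hKc, hKd⟩ := hSm.exists_isCompact_diff_lt hSvol
    (ε := ENNReal.ofReal δ * 2⁻¹) (mul_ne_zero hd0 hq0)
  refine ⟨K, hKS.trans diff_subset, hKc.isClosed, ?_, hconth.mono hKS⟩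
  have hsub : Icc a b \ K ⊆ T ∪ (S \ K) := by
    intro x hx
    by_cases hxT : x ∈ T
    · exact Or.inl hxT
    · exact Or.inr ⟨⟨hx.1, hxT⟩, hx.2⟩
  calc volume (Icc a b \ K) ≤ volume (T ∪ (S \ K)) := measure_mono hsub
    _ ≤ volume T + volume (S \ K) := measure_union_le _ _
    _ ≤ ENNReal.ofReal δ * 2⁻¹ + ENNReal.ofReal δ * 2⁻¹ := add_le_add hTvol hKd.le
    _ = ENNReal.ofReal δ := by
        rw [← mul_add, ENNReal.inv_two_add_inv_two, mul_one]

lemma lusin_real (h : ℝ → ℝ) (hm : Measurable h) (hb : ∀ x, |h x| ≤ 1)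
    (ε : ℝ) (hε : 0 < ε) :
    ∃ F : Set ℝ, IsClosed F ∧ volume Fᶜ < ENNReal.ofReal ε ∧ ContinuousOn h F := by
  classical
  set m : ℕ → ℝ := fun k => ((Equiv.intEquivNat.symm k : ℤ) : ℝ) with hm'
  have H : ∀ k : ℕ, ∃ F : Set ℝ, F ⊆ Icc (m k) (m k + 1) ∧ IsClosed F ∧
      volume (Icc (m k) (m k + 1) \ F) ≤ ENNReal.ofReal (ε / 4 * 2⁻¹ ^ k) ∧
      ContinuousOn h F :=
    fun k => lusin_piece h hm hb _ _ _ (by positivity)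
  choose F hFsub hFcl hFvol hFcont using H
  have hlf : LocallyFinite F := by
    intro x
    refine ⟨Metric.ball x 1, Metric.ball_mem_nhds x one_pos, ?_⟩
    have hsub : {k | (F k ∩ Metric.ball x 1).Nonempty} ⊆
        (fun n : ℤ => Equiv.intEquivNat n) '' (Set.Icc ⌈x - 2⌉ ⌊x + 1⌋) := by
      rintro k ⟨y, hyF, hyB⟩
      have hyI := hFsub k hyF
      have h3 : |y - x| < 1 := by
        rw [← Real.dist_eq]; exact Metric.mem_ball.mp hyB
      have h4 := abs_lt.mp h3
      refine ⟨Equiv.intEquivNat.symm k, ⟨?_, ?_⟩, Equiv.apply_symm_apply _ _⟩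
      · rw [Int.ceil_le]
        have := hyI.2
        simp only [hm'] at this ⊢
        linarith
      · rw [Int.le_floor]
        have := hyI.1
        simp only [hm'] at this ⊢
        linarith
    exact ((Set.finite_Icc _ _).image _).subset hsub
  refine ⟨⋃ k, F k, hlf.isClosed_iUnion hFcl, ?_, hlf.continuousOn_iUnion hFcl hFcont⟩
  have hcover : (⋃ k, F k)ᶜ ⊆ ⋃ k, (Icc (m k) (m k + 1) \ F k) := by
    intro x hx
    set k : ℕ := Equiv.intEquivNat ⌊x⌋ with hk
    have hmk : m k = (⌊x⌋ : ℝ) := by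
      simp [hm', hk, Equiv.symm_apply_apply]
    refine mem_iUnion.2 ⟨k, ⟨?_, fun hF => hx (mem_iUnion.2 ⟨k, hF⟩)⟩⟩
    rw [hmk]
    exact ⟨Int.floor_le x, (Int.lt_floor_add_one x).le⟩
  have hhalf : ∀ k : ℕ, ENNReal.ofReal ((2⁻¹:ℝ) ^ k) = (2⁻¹:ℝ≥0∞) ^ k := by
    intro k
    rw [ENNReal.ofReal_pow (by norm_num)]
    congr 1
    rw [ENNReal.ofReal_inv_of_pos (by norm_num)]
    norm_num
  calc volume (⋃ k, F k)ᶜ ≤ volume (⋃ k, (Icc (m k) (m k + 1) \ F k)) := measure_mono hcover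
    _ ≤ ∑' k, volume (Icc (m k) (m k + 1) \ F k) := measure_iUnion_le _
    _ ≤ ∑' k : ℕ, ENNReal.ofReal (ε / 4 * 2⁻¹ ^ k) := ENNReal.tsum_le_tsum hFvol
    _ = ENNReal.ofReal (ε / 4) * ∑' k : ℕ, (2⁻¹:ℝ≥0∞) ^ k := by
        rw [← ENNReal.tsum_mul_left]
        congr 1 with k
        rw [ENNReal.ofReal_mul (by positivity), hhalf]
    _ = ENNReal.ofReal (ε / 4) * 2 := by
        rw [ENNReal.tsum_geometric, ENNReal.one_sub_inv_two, inv_inv]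
    _ = ENNReal.ofReal (ε / 2) := by
        rw [show (2:ℝ≥0∞) = ENNReal.ofReal 2 by norm_num,
          ← ENNReal.ofReal_mul (by positivity)]
        congr 1
        ring
    _ < ENNReal.ofReal ε := (ENNReal.ofReal_lt_ofReal_iff hε).mpr (by linarith)

/-- Extended-real-valued Lusin's Theorem. -/
theorem lusin_ereal (f : ℝ → EReal) (hf : Measurable f) (ε : ℝ) (hε : 0 < ε) :
    ∃ g : ℝ → EReal, Continuous g ∧ volume {x : ℝ | f x ≠ g x} < ENNReal.ofReal ε ∧
      ∀ x : ℝ, (g x = ⊤ ∨ g x = ⊥) → (f x = ⊤ ∨ f x = ⊥) := by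
  classical
  set h : ℝ → ℝ := fun x =>
    if f x = ⊤ then 1 else if f x = ⊥ then -1 else sqz (f x).toReal with hh
  have hcont_sqz : Continuous sqz := by
    apply continuous_id.div (by continuity)
    intro x; positivity
  have hmh : Measurable h := by
    apply Measurable.ite (hf (measurableSet_singleton ⊤)) measurable_const
    apply Measurable.ite (hf (measurableSet_singleton ⊥)) measurable_const
    exact hcont_sqz.measurable.comp hf.ereal_toReal
  have hval_top : ∀ x, f x = ⊤ → h x = 1 := by
    intro x h1; simp [hh, h1]
  have hval_bot : ∀ x, f x = ⊥ → h x = -1 := by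
    intro x h1; simp [hh, h1]
  have hval_real : ∀ x, f x ≠ ⊤ → f x ≠ ⊥ → h x = sqz (f x).toReal := by
    intro x h1 h2; simp [hh, h1, h2]
  have hbh : ∀ x, |h x| ≤ 1 := by
    intro x
    by_cases h1 : f x = ⊤
    · rw [hval_top x h1]; norm_num
    · by_cases h2 : f x = ⊥
      · rw [hval_bot x h2]; norm_num
      · rw [hval_real x h1 h2]; exact (abs_sqz_lt_one _).le
  have hpsih : ∀ x, psiE (h x) = f x := by
    intro x
    by_cases h1 : f x = ⊤
    · rw [hval_top x h1, h1, psiE, if_pos le_rfl]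
    · by_cases h2 : f x = ⊥
      · rw [hval_bot x h2, h2, psiE, if_neg (by norm_num), if_pos le_rfl]
      · rw [hval_real x h1 h2, psiE_sqz, EReal.coe_toReal h1 h2]
  have hone : ∀ x, h x = 1 → f x = ⊤ := by
    intro x hx
    by_cases h1 : f x = ⊤
    · exact h1
    · exfalso
      by_cases h2 : f x = ⊥
      · rw [hval_bot x h2] at hx; norm_num at hx
      · rw [hval_real x h1 h2] at hx
        have := abs_sqz_lt_one (f x).toReal
        rw [hx] at this; norm_num at this
  have hnegone : ∀ x, h x = -1 → f x = ⊥ := by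
    intro x hx
    by_cases h1 : f x = ⊤
    · rw [hval_top x h1] at hx; norm_num at hx
    · by_cases h2 : f x = ⊥
      · exact h2
      · exfalso
        rw [hval_real x h1 h2] at hx
        have := abs_sqz_lt_one (f x).toReal
        rw [hx] at this; norm_num at this
  obtain ⟨F, hFcl, hFvol, hFcont⟩ := lusin_real h hmh hbh ε hε
  have hFne : F.Nonempty := by
    by_contra hne
    rw [not_nonempty_iff_eq_empty] at hne
    rw [hne, compl_empty] at hFvol
    exact absurd (hFvol.trans_le le_top) (by simp [Real.volume_univ])
  -- Tietze extension
  obtain ⟨G, hG⟩ := ContinuousMap.exists_restrict_eq (Y := ℝ) hFcl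
    ⟨F.restrict h, continuousOn_iff_continuous_restrict.1 hFcont⟩
  have hGF : ∀ x (hx : x ∈ F), G x = h x := by
    intro x hx
    have := congrFun (congrArg DFunLike.coe hG) ⟨x, hx⟩
    exact this
  set u₀ : ℝ → ℝ := fun x => max (-1) (min 1 (G x)) with hu₀
  have hu₀cont : Continuous u₀ := by
    apply continuous_const.max
    exact continuous_const.min G.continuous
  have hu₀le : ∀ x, -1 ≤ u₀ x ∧ u₀ x ≤ 1 := by
    intro x
    exact ⟨le_max_left _ _, max_le (by norm_num) (min_le_left _ _)⟩
  have hu₀F : ∀ x, x ∈ F → u₀ x = h x := by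
    intro x hx
    have hb := abs_le.mp (hbh x)
    rw [hu₀]
    simp only [hGF x hx]
    rw [min_eq_right hb.2, max_eq_right hb.1]
  set c : ℝ → ℝ := fun x => (1 + Metric.infDist x F)⁻¹ with hc
  have hcpos : ∀ x, 0 < c x := by
    intro x
    have := Metric.infDist_nonneg (s := F) (x := x)
    rw [hc]; positivity
  have hcle : ∀ x, c x ≤ 1 := by
    intro x
    have := Metric.infDist_nonneg (s := F) (x := x)
    rw [hc]
    rw [inv_le_one_iff₀]
    right; linarith
  have hccont : Continuous c := by
    apply Continuous.inv₀ (by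
      exact continuous_const.add (Metric.continuous_infDist_pt F))
    intro x
    have := Metric.infDist_nonneg (s := F) (x := x)
    positivity
  have hcF : ∀ x, x ∈ F → c x = 1 := by
    intro x hx
    show (1 + Metric.infDist x F)⁻¹ = 1
    rw [Metric.infDist_zero_of_mem hx]
    norm_num
  have hcmem : ∀ x, c x = 1 → x ∈ F := by
    intro x hx
    have hx' : (1 + Metric.infDist x F)⁻¹ = 1 := hx
    have h1 : 1 + Metric.infDist x F = 1 := inv_eq_one.mp hx'
    have h2 : Metric.infDist x F = 0 := by linarith
    exact (hFcl.mem_iff_infDist_zero hFne).mpr h2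
  set u : ℝ → ℝ := fun x => u₀ x * c x with hu
  have hucont : Continuous u := hu₀cont.mul hccont
  have huF : ∀ x, x ∈ F → u x = h x := by
    intro x hx
    rw [hu]
    simp only [hu₀F x hx, hcF x hx, mul_one]
  refine ⟨fun x => psiE (u x), psiE_continuous.comp hucont, ?_, ?_⟩
  · refine lt_of_le_of_lt (measure_mono ?_) hFvol
    intro x hx
    intro hxF
    exact hx (show f x = psiE (u x) by rw [huF x hxF, hpsih x])
  · intro x hx
    have hkey : x ∈ F ∧ u x = h x := by
      have habs : |u x| = 1 := by
        rcases hx with hx | hx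
        · have h1 : 1 ≤ u x := psiE_top hx
          have h2 : u x ≤ 1 := by
            rw [hu]
            calc u₀ x * c x ≤ 1 * c x := by
                  exact mul_le_mul_of_nonneg_right (hu₀le x).2 (hcpos x).le
              _ ≤ 1 := by rw [one_mul]; exact hcle x
          rw [abs_of_nonneg (by linarith)]; linarith
        · have h1 : u x ≤ -1 := psiE_bot hx
          have h2 : -1 ≤ u x := by
            rw [hu]
            calc (-1 : ℝ) ≤ -c x := by linarith [hcle x]
              _ = -1 * c x := by ring
              _ ≤ u₀ x * c x := mul_le_mul_of_nonneg_right (hu₀le x).1 (hcpos x).le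
          rw [abs_of_nonpos (by linarith)]; linarith
      have hcx : c x = 1 := by
        have h1 : |u x| ≤ c x := by
          rw [hu, abs_mul, abs_of_pos (hcpos x)]
          calc |u₀ x| * c x ≤ 1 * c x := by
                refine mul_le_mul_of_nonneg_right ?_ (hcpos x).le
                exact abs_le.mpr ⟨(hu₀le x).1, (hu₀le x).2⟩
            _ = c x := one_mul _
        have := hcle x
        rw [habs] at h1
        linarith
      have hxF := hcmem x hcx
      exact ⟨hxF, huF x hxF⟩
    rcases hx with hx | hx
    · left
      apply hone x
      have h1 : 1 ≤ u x := psiE_top hx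
      have h2 := (abs_le.mp (hbh x)).2
      rw [← hkey.2]; linarith [hkey.2 ▸ h1]
    · right
      apply hnegone x
      have h1 : u x ≤ -1 := psiE_bot hx
      have h2 := (abs_le.mp (hbh x)).1
      rw [← hkey.2]; linarith [hkey.2 ▸ h1]
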